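/- For N = 5, the following exact integral identity holds: ∫_{ℝ⁵_+} x₅² |∇_{x̄} W_{1,0}(x)|² dx = |S³|/8, where ∇_{x̄} denotes the gradient with respect to the first four variables x₁,…,x₄ and |S³| = 2π² is the surface area of the unit 3-sphere. -/

import Mathlib

open MeasureTheory Filter Topology

noncomputable section

/-- The model for `ℝ^N_+`: pairs `(x̄, t)` with `x̄ ∈ ℝ^n` (Euclidean) and `t ∈ ℝ`;
the open upper half-space is `{p | 0 < p.2}`. -/
abbrev HSp (n : ℕ) := EuclideanSpace ℝ (Fin n) × ℝ

/-- The open upper half-space. -/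
def upperHalf (n : ℕ) : Set (HSp n) := {p | 0 < p.2}

/-- Directional derivative of `f` at `x` in direction `v`. -/
def pdv {n : ℕ} (v : HSp n) (f : HSp n → ℝ) (x : HSp n) : ℝ := fderiv ℝ f x v

/-- The `i`-th horizontal standard basis vector. -/
def eH {n : ℕ} (i : Fin n) : HSp n := (EuclideanSpace.single i 1, 0)

/-- The vertical standard basis vector. -/
def eV {n : ℕ} : HSp n := (0, 1)

/-- The Laplacian `Δf = ∑ᵢ ∂ᵢᵢ f + ∂_NN f`. -/
def lap {n : ℕ} (f : HSp n → ℝ) (x : HSp n) : ℝ :=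
  (∑ i : Fin n, pdv (eH i) (pdv (eH i) f) x) + pdv eV (pdv eV f) x

/-- The Euclidean length `|x|` of a point `x = (x̄, t)`. -/
def rad {n : ℕ} (x : HSp n) : ℝ := Real.sqrt (‖x.1‖ ^ 2 + x.2 ^ 2)

/-- The bubble `W_{λ,ξ}`. -/
def Bub (N : ℕ) (lam : ℝ) (ξ : EuclideanSpace ℝ (Fin (N - 1))) (x : HSp (N - 1)) : ℝ :=
  lam ^ (((N : ℝ) - 2) / 2) / (‖x.1 - ξ‖ ^ 2 + (x.2 + lam) ^ 2) ^ (((N : ℝ) - 2) / 2)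

/-- The trace `w_{λ,ξ}` of the bubble on the boundary. -/
def bub (N : ℕ) (lam : ℝ) (ξ y : EuclideanSpace ℝ (Fin (N - 1))) : ℝ := Bub N lam ξ (y, 0)

/-- The bubble `W_{1,0}` in dimension `N = 5`. -/
def W5 : HSp 4 → ℝ := fun x => 1 / (‖x.1‖ ^ 2 + (x.2 + 1) ^ 2) ^ ((3 : ℝ) / 2)

/-! ### Auxiliary lemmas -/

open Set

lemma my_tendsto_aux (a b c : ℝ) (hb : 0 < b) (k : ℕ) (hk : 0 < k) :
    Tendsto (fun x : ℝ => c / (b*(x^2+a^2)^k)) atTop (𝓝 0) := by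
  have h1 : Tendsto (fun x : ℝ => x^2+a^2) atTop atTop :=
    tendsto_atTop_add_const_right _ _ (tendsto_pow_atTop two_ne_zero)
  have h2 : Tendsto (fun x : ℝ => (x^2+a^2)^k) atTop atTop :=
    (tendsto_pow_atTop hk.ne').comp h1
  have h3 : Tendsto (fun x : ℝ => b*(x^2+a^2)^k) atTop atTop :=
    Tendsto.const_mul_atTop hb h2
  exact Tendsto.div_atTop tendsto_const_nhds h3

lemma my_oneD1 (a : ℝ) (ha : 0 < a) :
    ∫ r in Ioi (0:ℝ), r^5/(r^2+a^2)^5 = 1/(24*a^4) := by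
  have key : ∀ x ∈ Ici (0:ℝ), HasDerivAt
      (fun r : ℝ => -1/(4*(r^2+a^2)^2) + a^2/(3*(r^2+a^2)^3) - a^4/(8*(r^2+a^2)^4))
      (x^5/(x^2+a^2)^5) x := by
    intro x _
    have hu : x^2 + a^2 ≠ 0 := by positivity
    have hU : HasDerivAt (fun r : ℝ => r^2 + a^2) (2*x) x := by
      simpa using (hasDerivAt_pow 2 x).add_const (a^2)
    have h1 : HasDerivAt (fun r : ℝ => -1/(4*(r^2+a^2)^2))
        (-((-1) * (4*(2*(x^2+a^2)^(2-1)*(2*x)))) / (4*(x^2+a^2)^2)^2) x := by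
      simpa using (hasDerivAt_const x (-1:ℝ)).fun_div ((hU.fun_pow 2).const_mul 4) (by positivity)
    have h2 : HasDerivAt (fun r : ℝ => a^2/(3*(r^2+a^2)^3))
        (-(a^2 * (3*(3*(x^2+a^2)^(3-1)*(2*x)))) / (3*(x^2+a^2)^3)^2) x := by
      simpa using (hasDerivAt_const x (a^2)).fun_div ((hU.fun_pow 3).const_mul 3) (by positivity)
    have h3 : HasDerivAt (fun r : ℝ => a^4/(8*(r^2+a^2)^4))
        (-(a^4 * (8*(4*(x^2+a^2)^(4-1)*(2*x)))) / (8*(x^2+a^2)^4)^2) x := by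
      simpa using (hasDerivAt_const x (a^4)).fun_div ((hU.fun_pow 4).const_mul 8) (by positivity)
    refine ((h1.fun_add h2).fun_sub h3).congr_deriv ?_
    field_simp
    ring
  have tend : Tendsto (fun r : ℝ => -1/(4*(r^2+a^2)^2) + a^2/(3*(r^2+a^2)^3) - a^4/(8*(r^2+a^2)^4))
      atTop (𝓝 0) := by
    have := ((my_tendsto_aux a 4 (-1) (by norm_num) 2 (by norm_num)).add
      (my_tendsto_aux a 3 (a^2) (by norm_num) 3 (by norm_num))).sub
      (my_tendsto_aux a 8 (a^4) (by norm_num) 4 (by norm_num))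
    simpa using this
  have := integral_Ioi_of_hasDerivAt_of_nonneg' key
    (fun x hx => div_nonneg (pow_nonneg (le_of_lt hx) 5) (by positivity)) tend
  rw [this]
  have ha4 : a^4 ≠ 0 := by positivity
  field_simp
  ring

lemma my_tendsto_aux2 (b c : ℝ) (hb : 0 < b) (k : ℕ) (hk : 0 < k) :
    Tendsto (fun x : ℝ => c / (b*(x+1)^k)) atTop (𝓝 0) := by
  have h1 : Tendsto (fun x : ℝ => x+1) atTop atTop := tendsto_atTop_add_const_right _ _ tendsto_id
  exact Tendsto.div_atTop tendsto_const_nhds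
    (Tendsto.const_mul_atTop hb ((tendsto_pow_atTop hk.ne').comp h1))

lemma my_oneD2_key : ∀ x ∈ Ici (0:ℝ), HasDerivAt
    (fun t : ℝ => -1/(1*(t+1)) + 1/(1*(t+1)^2) - 1/(3*(t+1)^3))
    (x^2/(x+1)^4) x := by
  intro x hx
  have hx0 : (0:ℝ) ≤ x := hx
  have hu : x + 1 ≠ 0 := by positivity
  have hU : HasDerivAt (fun t : ℝ => t + 1) 1 x := (hasDerivAt_id x).add_const 1
  have h1 : HasDerivAt (fun t : ℝ => -1/(1*(t+1)))
      (-((-1) * (1*1)) / (1*(x+1))^2) x := by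
    simpa using (hasDerivAt_const x (-1:ℝ)).fun_div (hU.const_mul 1) (by positivity)
  have h2 : HasDerivAt (fun t : ℝ => 1/(1*(t+1)^2))
      (-((1:ℝ) * (1*(2*(x+1)^(2-1)*1))) / (1*(x+1)^2)^2) x := by
    simpa using (hasDerivAt_const x (1:ℝ)).fun_div ((hU.fun_pow 2).const_mul 1) (by positivity)
  have h3 : HasDerivAt (fun t : ℝ => 1/(3*(t+1)^3))
      (-((1:ℝ) * (3*(3*(x+1)^(3-1)*1))) / (3*(x+1)^3)^2) x := by
    simpa using (hasDerivAt_const x (1:ℝ)).fun_div ((hU.fun_pow 3).const_mul 3) (by positivity)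
  refine ((h1.fun_add h2).fun_sub h3).congr_deriv ?_
  field_simp
  ring

lemma my_oneD2_tend : Tendsto
    (fun t : ℝ => -1/(1*(t+1)) + 1/(1*(t+1)^2) - 1/(3*(t+1)^3)) atTop (𝓝 0) := by
  have := ((my_tendsto_aux2 1 (-1) (by norm_num) 1 (by norm_num)).add
    (my_tendsto_aux2 1 1 (by norm_num) 2 (by norm_num))).sub
    (my_tendsto_aux2 3 1 (by norm_num) 3 (by norm_num))
  simpa using this

lemma my_oneD2 : ∫ t in Ioi (0:ℝ), t^2/(t+1)^4 = 1/3 := by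
  have := integral_Ioi_of_hasDerivAt_of_nonneg' my_oneD2_key
    (fun x hx => div_nonneg (sq_nonneg x) (by positivity)) my_oneD2_tend
  rw [this]
  norm_num

lemma my_oneD2_integrable : IntegrableOn (fun t : ℝ => t^2/(t+1)^4) (Ioi (0:ℝ)) :=
  integrableOn_Ioi_deriv_of_nonneg' my_oneD2_key
    (fun x hx => div_nonneg (sq_nonneg x) (by positivity)) my_oneD2_tend

lemma my_q_hasFDeriv (x : HSp 4) :
    HasFDerivAt (fun y : HSp 4 => ‖y.1‖ ^ 2 + (y.2 + 1) ^ 2)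
      ((2 • (innerSL ℝ x.1).comp (ContinuousLinearMap.fst ℝ (EuclideanSpace ℝ (Fin 4)) ℝ))
        + ((x.2 + 1) • (ContinuousLinearMap.snd ℝ (EuclideanSpace ℝ (Fin 4)) ℝ)
           + (x.2 + 1) • (ContinuousLinearMap.snd ℝ (EuclideanSpace ℝ (Fin 4)) ℝ))) x := by
  have h1 : HasFDerivAt (fun y : HSp 4 => ‖y.1‖ ^ 2)
      (2 • (innerSL ℝ x.1).comp (ContinuousLinearMap.fst ℝ (EuclideanSpace ℝ (Fin 4)) ℝ)) x :=
    (hasFDerivAt_fst (p := x)).norm_sq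
  have h2' : HasFDerivAt (fun y : HSp 4 => y.2 + 1)
      (ContinuousLinearMap.snd ℝ (EuclideanSpace ℝ (Fin 4)) ℝ) x :=
    (hasFDerivAt_snd (p := x)).add_const 1
  have h2 : HasFDerivAt (fun y : HSp 4 => (y.2 + 1) ^ 2)
      ((x.2 + 1) • (ContinuousLinearMap.snd ℝ (EuclideanSpace ℝ (Fin 4)) ℝ)
        + (x.2 + 1) • (ContinuousLinearMap.snd ℝ (EuclideanSpace ℝ (Fin 4)) ℝ)) x := by
    have := h2'.mul h2'
    have heq : (fun y : HSp 4 => (y.2 + 1) ^ 2) = fun y : HSp 4 => (y.2+1)*(y.2+1) := by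
      funext y; ring
    rw [heq]; exact this
  exact h1.add h2

lemma my_pdv_W5 (x : HSp 4) (hx : 0 < x.2) (i : Fin 4) :
    pdv (eH i) W5 x
      = (-3) * x.1 i * (‖x.1‖ ^ 2 + (x.2 + 1) ^ 2) ^ (-(5:ℝ)/2) := by
  set q : HSp 4 → ℝ := fun y => ‖y.1‖ ^ 2 + (y.2 + 1) ^ 2 with hq
  have hqx : 0 < q x := by
    have : 0 < (x.2 + 1)^2 := by positivity
    have h0 : (0:ℝ) ≤ ‖x.1‖^2 := by positivity
    simp only [hq]; linarith
  have hW : W5 = fun y => q y ^ (-(3:ℝ)/2) := by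
    funext y
    have hy : 0 ≤ q y := by positivity
    rw [W5, hq]
    rw [show (-(3:ℝ)/2) = -((3:ℝ)/2) by ring, Real.rpow_neg hy, one_div]
  have hd : HasFDerivAt W5 ((((-(3:ℝ)/2)) * q x ^ ((-(3:ℝ)/2) - 1)) •
      ((2 • (innerSL ℝ x.1).comp (ContinuousLinearMap.fst ℝ (EuclideanSpace ℝ (Fin 4)) ℝ))
        + ((x.2 + 1) • (ContinuousLinearMap.snd ℝ (EuclideanSpace ℝ (Fin 4)) ℝ)
           + (x.2 + 1) • (ContinuousLinearMap.snd ℝ (EuclideanSpace ℝ (Fin 4)) ℝ)))) x := by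
    rw [hW]
    exact (my_q_hasFDeriv x).rpow_const (Or.inl hqx.ne')
  rw [pdv, hd.fderiv]
  have he : (eH i : HSp 4).1 = EuclideanSpace.single i (1:ℝ) := rfl
  have he2 : (eH i : HSp 4).2 = 0 := rfl
  simp only [ContinuousLinearMap.smul_apply, ContinuousLinearMap.add_apply,
    ContinuousLinearMap.comp_apply, ContinuousLinearMap.coe_smul', Pi.smul_apply,
    ContinuousLinearMap.coe_fst', ContinuousLinearMap.coe_snd', he, he2,
    innerSL_apply_apply, smul_eq_mul]
  rw [EuclideanSpace.inner_single_right]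
  have : ((-(3:ℝ))/2 - 1) = (-(5:ℝ)/2) := by ring
  rw [this]
  simp
  ring

lemma my_sum_sq_eq_normsq (y : EuclideanSpace ℝ (Fin 4)) : ∑ i, (y i)^2 = ‖y‖^2 := by
  rw [EuclideanSpace.norm_eq, Real.sq_sqrt (by positivity)]
  simp [Real.norm_eq_abs, sq_abs]

lemma my_sum_pdv_sq (x : HSp 4) (hx : 0 < x.2) :
    ∑ i, (pdv (eH i) W5 x)^2
      = 9 * ‖x.1‖^2 / (‖x.1‖^2 + (x.2+1)^2)^5 := by
  have hq : (0:ℝ) < ‖x.1‖^2 + (x.2+1)^2 := by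
    have : 0 < (x.2 + 1)^2 := by positivity
    have h0 : (0:ℝ) ≤ ‖x.1‖^2 := by positivity
    linarith
  have h : ∀ i, (pdv (eH i) W5 x)^2
      = 9 * (x.1 i)^2 * ((‖x.1‖^2 + (x.2+1)^2)^5)⁻¹ := by
    intro i
    rw [my_pdv_W5 x hx i]
    have h2 : ((‖x.1‖^2 + (x.2+1)^2) ^ (-(5:ℝ)/2))^2
        = ((‖x.1‖^2 + (x.2+1)^2)^5)⁻¹ := by
      rw [← Real.rpow_natCast ((‖x.1‖^2 + (x.2+1)^2) ^ (-(5:ℝ)/2)) 2,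
        ← Real.rpow_mul hq.le]
      norm_num
    rw [mul_pow, mul_pow, h2]
    ring
  rw [Finset.sum_congr rfl (fun i _ => h i), ← Finset.sum_mul, ← Finset.mul_sum,
    my_sum_sq_eq_normsq]
  ring

lemma my_ball_vol4 : (volume (Metric.ball (0 : EuclideanSpace ℝ (Fin 4)) 1)).toReal
    = Real.pi^2 / 2 := by
  rw [EuclideanSpace.volume_ball]
  have hsq : Real.sqrt Real.pi ^ (Fintype.card (Fin 4)) = Real.pi ^ 2 := by
    rw [show Fintype.card (Fin 4) = 4 from rfl, show (4:ℕ) = 2*2 from rfl, pow_mul,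
      Real.sq_sqrt Real.pi_pos.le]
  have hg : Real.Gamma ((Fintype.card (Fin 4)) / 2 + 1) = 2 := by
    rw [show ((Fintype.card (Fin 4) : ℝ)) = 4 by simp]
    rw [show (4:ℝ)/2 + 1 = ((2:ℕ):ℝ) + 1 by norm_num, Real.Gamma_nat_eq_factorial]
    norm_num
  rw [hsq, hg]
  simp [ENNReal.toReal_ofReal (by positivity : (0:ℝ) ≤ Real.pi^2/2)]

lemma my_inner_integral (a : ℝ) (ha : 0 < a) :
    ∫ y : EuclideanSpace ℝ (Fin 4), 9*‖y‖^2/(‖y‖^2+a^2)^5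
      = 3 * Real.pi^2 / (4*a^4) := by
  have := integral_fun_norm_addHaar (volume : Measure (EuclideanSpace ℝ (Fin 4)))
    (fun r => 9*r^2/(r^2+a^2)^5)
  simp only [finrank_euclideanSpace, Fintype.card_fin] at this
  rw [this, measureReal_def, my_ball_vol4]
  have h1 : ∫ y in Ioi (0:ℝ), y ^ (4-1) • (9*y^2/(y^2+a^2)^5)
      = 9 * ∫ r in Ioi (0:ℝ), r^5/(r^2+a^2)^5 := by
    rw [← integral_const_mul]
    congr 1
    funext y
    simp only [smul_eq_mul]
    ring
  rw [h1, my_oneD1 a ha]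
  have ha4 : a^4 ≠ 0 := by positivity
  simp only [nsmul_eq_mul, smul_eq_mul]
  field_simp
  ring

lemma my_slice_integrable (a : ℝ) (ha : 1 ≤ a) :
    Integrable (fun y : EuclideanSpace ℝ (Fin 4) => 9*‖y‖^2/(‖y‖^2+a^2)^5) := by
  have hbig : Integrable (fun y : EuclideanSpace ℝ (Fin 4) => (1+‖y‖)^(-(8:ℝ))) :=
    integrable_one_add_norm (by simp [finrank_euclideanSpace]; norm_num)
  refine (hbig.const_mul 144).mono' ?_ ?_
  · apply Measurable.aestronglyMeasurable
    fun_prop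
  · filter_upwards with y
    have hy : (0:ℝ) ≤ ‖y‖ := norm_nonneg y
    have hd : (0:ℝ) < ‖y‖^2 + a^2 := by positivity
    have key : (1+‖y‖)^2 ≤ 2*(‖y‖^2+a^2) := by
      nlinarith [sq_nonneg (‖y‖-1), sq_nonneg a, ha, hy]
    have h8 : (1+‖y‖)^8 ≤ 2^4*(‖y‖^2+a^2)^4 := by
      calc (1+‖y‖)^8 = ((1+‖y‖)^2)^4 := by ring
      _ ≤ (2*(‖y‖^2+a^2))^4 := by
          apply pow_le_pow_left₀ (by positivity) key
      _ = 2^4*(‖y‖^2+a^2)^4 := by ring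
    rw [Real.norm_eq_abs, abs_of_nonneg (by positivity)]
    rw [Real.rpow_neg (by positivity), show ((8:ℝ)) = ((8:ℕ):ℝ) by norm_num,
      Real.rpow_natCast]
    set u := ‖y‖^2 + a^2 with hu
    have hd5 : (0:ℝ) < u^5 := by positivity
    have h18 : (0:ℝ) < (1+‖y‖)^8 := by positivity
    rw [inv_eq_one_div, mul_one_div, div_le_div_iff₀ hd5 h18]
    calc 9*‖y‖^2*(1+‖y‖)^8 ≤ (9*u)*(2^4*u^4) := by
          apply mul_le_mul (by nlinarith [sq_nonneg a]) h8 (by positivity) (by positivity)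
      _ = 144*u^5 := by ring

/-- `∫_{ℝ⁵₊} x₅² |∇_{x̄} W_{1,0}|² dx = |S³|/8` where `|S³| = 2π²`. -/
theorem integral_x5sq_grad_horiz_W5 :
    (∫ x in upperHalf 4, x.2 ^ 2 * ∑ i, (pdv (eH i) W5 x) ^ 2)
      = (2 * Real.pi ^ 2) / 8 := by
  set F : HSp 4 → ℝ := fun p => p.2^2 * (9*‖p.1‖^2/(‖p.1‖^2+(p.2+1)^2)^5) with hF
  have hmeasS : MeasurableSet (upperHalf 4) :=
    measurableSet_lt measurable_const measurable_snd
  have step1 : (∫ x in upperHalf 4, x.2 ^ 2 * ∑ i, (pdv (eH i) W5 x) ^ 2)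
      = ∫ x in upperHalf 4, F x := by
    apply setIntegral_congr_fun hmeasS
    intro x hx
    rw [hF]
    simp only
    rw [my_sum_pdv_sq x hx]
  have hset : upperHalf 4 = (univ : Set (EuclideanSpace ℝ (Fin 4))) ×ˢ Ioi (0:ℝ) := by
    ext p
    simp [upperHalf, Set.mem_prod]
  have hrestrict : (volume : Measure (HSp 4)).restrict (upperHalf 4)
      = (volume : Measure (EuclideanSpace ℝ (Fin 4))).prod
          ((volume : Measure ℝ).restrict (Ioi 0)) := by
    rw [hset, Measure.volume_eq_prod, ← Measure.prod_restrict, Measure.restrict_univ]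
  have hFmeas : AEStronglyMeasurable F
      ((volume : Measure (EuclideanSpace ℝ (Fin 4))).prod
        ((volume : Measure ℝ).restrict (Ioi 0))) := by
    apply Measurable.aestronglyMeasurable
    fun_prop
  have hslices : ∀ᵐ t ∂((volume : Measure ℝ).restrict (Ioi 0)),
      Integrable (fun y : EuclideanSpace ℝ (Fin 4) => F (y, t)) := by
    filter_upwards [ae_restrict_mem measurableSet_Ioi] with t ht
    have h := (my_slice_integrable (t+1) (by simp at ht; linarith)).const_mul (t^2)
    exact h
  have hinner : ∀ t : ℝ, 0 < t →
      (∫ y : EuclideanSpace ℝ (Fin 4), F (y, t))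
        = t^2 * (3 * Real.pi^2 / (4*(t+1)^4)) := by
    intro t ht
    have : (∫ y : EuclideanSpace ℝ (Fin 4), F (y, t))
        = ∫ y : EuclideanSpace ℝ (Fin 4), t^2 * (9*‖y‖^2/(‖y‖^2+(t+1)^2)^5) := rfl
    rw [this, integral_const_mul, my_inner_integral (t+1) (by linarith)]
  have hnormint : Integrable
      (fun t => ∫ y : EuclideanSpace ℝ (Fin 4), ‖F (y, t)‖)
      ((volume : Measure ℝ).restrict (Ioi 0)) := by
    have hG : Integrable (fun t : ℝ => (3*Real.pi^2/4) * (t^2/(t+1)^4))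
        ((volume : Measure ℝ).restrict (Ioi 0)) :=
      my_oneD2_integrable.const_mul _
    apply hG.congr
    filter_upwards [ae_restrict_mem measurableSet_Ioi] with t ht
    have ht' : 0 < t := ht
    have h1 : (∫ y : EuclideanSpace ℝ (Fin 4), ‖F (y, t)‖)
          = ∫ y : EuclideanSpace ℝ (Fin 4), F (y, t) := by
        congr 1
        funext y
        rw [Real.norm_eq_abs, abs_of_nonneg]
        rw [hF]
        have : (0:ℝ) < ‖y‖^2 + (t+1)^2 := by positivity
        positivity
    rw [h1, hinner t ht']
    field_simp
  have hInt : Integrable F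
      ((volume : Measure (EuclideanSpace ℝ (Fin 4))).prod
        ((volume : Measure ℝ).restrict (Ioi 0))) := by
    rw [integrable_prod_iff' hFmeas]
    exact ⟨hslices, hnormint⟩
  rw [step1]
  rw [show (∫ x in upperHalf 4, F x)
      = ∫ z, F z ∂((volume : Measure (EuclideanSpace ℝ (Fin 4))).prod
          ((volume : Measure ℝ).restrict (Ioi 0))) by rw [← hrestrict]]
  rw [integral_prod_symm F hInt]
  have hcongr : (∫ t in Ioi (0:ℝ), ∫ y : EuclideanSpace ℝ (Fin 4), F (y, t))
      = ∫ t in Ioi (0:ℝ), (3*Real.pi^2/4) * (t^2/(t+1)^4) := by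
    apply setIntegral_congr_fun measurableSet_Ioi
    intro t ht
    have ht' : (0:ℝ) < t := ht
    show (∫ y : EuclideanSpace ℝ (Fin 4), F (y, t)) = 3*Real.pi^2/4 * (t^2/(t+1)^4)
    rw [hinner t ht']
    have h0 : ((t:ℝ)+1)^4 ≠ 0 := by positivity
    field_simp
  rw [hcongr, integral_const_mul, my_oneD2]
  ring
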